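/- Let $E$ be a convex subset of a normed vector space $\mathcal{X}$, $\bar{e} \in E$, and $y \in T_E^\flat(\bar{e})$. Then $T_E^{\flat(2)}(\bar{e}, y) + T_E^\flat(\bar{e}) = T_E^{\flat(2)}(\bar{e}, y)$, i.e. the second-order adjacent subset is stable under addition of elements of the adjacent cone. -/

import Mathlib

open Filter Metric Set MeasureTheory Pointwise

/-- Kuratowski lower limit of a family of sets `K h` as `h → 0⁺`:
points whose distance to `K h` tends to `0`. -/
noncomputable def liminfSets {X : Type*} [PseudoMetricSpace X] (K : ℝ → Set X) : Set X :=
  {v | Filter.Tendsto (fun h => Metric.infDist v (K h)) (nhdsWithin 0 (Set.Ioi 0)) (nhds 0)}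

/-- The adjacent cone `T_K^♭(x) = Liminf_{h→0⁺} (K - x)/h`. -/
noncomputable def adjCone {X : Type*} [NormedAddCommGroup X] [NormedSpace ℝ X]
    (K : Set X) (x : X) : Set X :=
  liminfSets (fun h => (fun k => h⁻¹ • (k - x)) '' K)

/-- The second-order adjacent subset `T_K^{♭(2)}(x,v) = Liminf_{h→0⁺} (K - x - hv)/h²`. -/
noncomputable def adjCone2 {X : Type*} [NormedAddCommGroup X] [NormedSpace ℝ X]
    (K : Set X) (x v : X) : Set X :=
  liminfSets (fun h => (fun k => (h ^ 2)⁻¹ • (k - x - h • v)) '' K)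

lemma zero_mem_adjCone {X : Type*} [NormedAddCommGroup X] [NormedSpace ℝ X]
    {E : Set X} {e : X} (he : e ∈ E) : (0 : X) ∈ adjCone E e := by
  show Tendsto (fun h : ℝ => infDist (0:X) ((fun k => h⁻¹ • (k - e)) '' E)) _ _
  have key : ∀ h : ℝ, infDist (0:X) ((fun k => h⁻¹ • (k - e)) '' E) = 0 := by
    intro h
    refine le_antisymm ?_ Metric.infDist_nonneg
    have := Metric.infDist_le_dist_of_mem (x := (0:X))
      (Set.mem_image_of_mem (fun k => h⁻¹ • (k - e)) he)
    simpa using this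
  simp only [key]
  exact tendsto_const_nhds

lemma add_mem_adjCone2 {X : Type*} [NormedAddCommGroup X] [NormedSpace ℝ X]
    {E : Set X} (hE : Convex ℝ E) {e : X} (he : e ∈ E) {y w u : X}
    (hw : w ∈ adjCone2 E e y) (hu : u ∈ adjCone E e) : w + u ∈ adjCone2 E e y := by
  have hw' : Tendsto (fun h : ℝ => infDist w ((fun k => (h^2)⁻¹ • (k - e - h • y)) '' E))
      (nhdsWithin 0 (Set.Ioi 0)) (nhds 0) := hw
  have hu' : Tendsto (fun h : ℝ => infDist u ((fun k => h⁻¹ • (k - e)) '' E))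
      (nhdsWithin 0 (Set.Ioi 0)) (nhds 0) := hu
  show Tendsto (fun h : ℝ => infDist (w+u) ((fun k => (h^2)⁻¹ • (k - e - h • y)) '' E))
      (nhdsWithin 0 (Set.Ioi 0)) (nhds 0)
  -- the substitution map h ↦ h/(1-h)
  have hs : Tendsto (fun h : ℝ => h / (1 - h)) (nhdsWithin 0 (Set.Ioi 0))
      (nhdsWithin 0 (Set.Ioi 0)) := by
    rw [tendsto_nhdsWithin_iff]
    constructor
    · have hc : ContinuousAt (fun h : ℝ => h / (1 - h)) 0 := by
        apply ContinuousAt.div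
        · exact continuousAt_id
        · fun_prop
        · norm_num
      have := hc.tendsto
      simp only [sub_zero, div_one, zero_div] at this
      exact this.mono_left nhdsWithin_le_nhds
    · filter_upwards [Ioo_mem_nhdsGT_of_mem (by norm_num : (0:ℝ) ∈ Ico (0:ℝ) 1)] with h hh
      exact div_pos hh.1 (by linarith [hh.2])
  have hcomp : Tendsto (fun h : ℝ =>
      infDist w ((fun k => (((h/(1-h)))^2)⁻¹ • (k - e - (h/(1-h)) • y)) '' E))
      (nhdsWithin 0 (Set.Ioi 0)) (nhds 0) := hw'.comp hs
  -- the majorant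
  have hg : Tendsto (fun h : ℝ =>
      2 * infDist w ((fun k => (((h/(1-h)))^2)⁻¹ • (k - e - (h/(1-h)) • y)) '' E)
      + infDist u ((fun k => h⁻¹ • (k - e)) '' E) + 2 * h * ‖w‖)
      (nhdsWithin 0 (Set.Ioi 0)) (nhds 0) := by
    have h3 : Tendsto (fun h : ℝ => 2 * h * ‖w‖) (nhdsWithin 0 (Set.Ioi 0)) (nhds 0) := by
      have : Tendsto (fun h : ℝ => 2 * h * ‖w‖) (nhds 0) (nhds (2 * 0 * ‖w‖)) :=
        ((continuous_const.mul continuous_id).mul continuous_const).tendsto 0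
      simpa using this.mono_left nhdsWithin_le_nhds
    have := ((hcomp.const_mul 2).add hu').add h3
    simpa using this
  apply squeeze_zero' (Filter.Eventually.of_forall fun h => Metric.infDist_nonneg) _ hg
  filter_upwards [Ioo_mem_nhdsGT_of_mem (by norm_num : (0:ℝ) ∈ Ico (0:ℝ) (1/2))] with h hh
  obtain ⟨hh0, hh2⟩ := hh
  have h1h : (0:ℝ) < 1 - h := by linarith
  set s : ℝ := h / (1 - h) with hs_def
  have hs0 : 0 < s := div_pos hh0 h1h
  have hc1 : (1:ℝ) ≤ (1 - h)⁻¹ := by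
    rw [le_inv_comm₀ one_pos h1h]; linarith
  have hc2 : (1 - h)⁻¹ ≤ 2 := by
    rw [inv_le_comm₀ h1h (by norm_num)]; linarith
  apply le_of_forall_pos_le_add
  intro ε hε
  -- pick near-optimal points
  have hne1 : ((fun k => (s^2)⁻¹ • (k - e - s • y)) '' E).Nonempty :=
    ⟨_, Set.mem_image_of_mem _ he⟩
  have hne2 : ((fun k => h⁻¹ • (k - e)) '' E).Nonempty :=
    ⟨_, Set.mem_image_of_mem _ he⟩
  obtain ⟨α, hαE, hα⟩ := (Metric.infDist_lt_iff hne1).1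
    (by linarith : infDist w ((fun k => (s^2)⁻¹ • (k - e - s • y)) '' E)
      < infDist w ((fun k => (s^2)⁻¹ • (k - e - s • y)) '' E) + ε/4)
  obtain ⟨a, haE, rfl⟩ := hαE
  obtain ⟨β, hβE, hβ⟩ := (Metric.infDist_lt_iff hne2).1
    (by linarith : infDist u ((fun k => h⁻¹ • (k - e)) '' E)
      < infDist u ((fun k => h⁻¹ • (k - e)) '' E) + ε/2)
  obtain ⟨b, hbE, rfl⟩ := hβE
  -- the convex combination
  have hpE : (1 - h) • a + h • b ∈ E := hE haE hbE (by linarith) hh0.le (by ring)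
  have hmem : (1-h)⁻¹ • ((s^2)⁻¹ • (a - e - s • y)) + h⁻¹ • (b - e)
      ∈ (fun k => (h^2)⁻¹ • (k - e - h • y)) '' E := by
    refine ⟨(1 - h) • a + h • b, hpE, ?_⟩
    have hhne : h ≠ 0 := ne_of_gt hh0
    have h1hne : (1 - h) ≠ 0 := ne_of_gt h1h
    show (h^2)⁻¹ • ((1 - h) • a + h • b - e - h • y)
        = (1-h)⁻¹ • ((s^2)⁻¹ • (a - e - s • y)) + h⁻¹ • (b - e)
    rw [hs_def]
    match_scalars <;> field_simp <;> ring
  refine (Metric.infDist_le_dist_of_mem hmem).trans ?_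
  have key : dist (w + u) ((1-h)⁻¹ • ((s^2)⁻¹ • (a - e - s • y)) + h⁻¹ • (b - e))
      ≤ 2 * h * ‖w‖ + 2 * dist w ((s^2)⁻¹ • (a - e - s • y)) + dist u (h⁻¹ • (b - e)) := by
    set A := (s^2)⁻¹ • (a - e - s • y)
    set B := h⁻¹ • (b - e)
    have e1 : (w + u) - ((1-h)⁻¹ • A + B) = (w - (1-h)⁻¹ • A) + (u - B) := by abel
    rw [dist_eq_norm, e1]
    have e2 : w - (1-h)⁻¹ • A = (1 - (1-h)⁻¹) • w + (1-h)⁻¹ • (w - A) := by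
      rw [sub_smul, one_smul, smul_sub]; abel
    calc ‖(w - (1-h)⁻¹ • A) + (u - B)‖ ≤ ‖w - (1-h)⁻¹ • A‖ + ‖u - B‖ := norm_add_le _ _
      _ ≤ (‖(1 - (1-h)⁻¹) • w‖ + ‖(1-h)⁻¹ • (w - A)‖) + ‖u - B‖ := by
          rw [e2]; exact add_le_add (norm_add_le _ _) le_rfl
      _ = |1 - (1-h)⁻¹| * ‖w‖ + |(1-h)⁻¹| * ‖w - A‖ + ‖u - B‖ := by
          rw [norm_smul, norm_smul, Real.norm_eq_abs, Real.norm_eq_abs]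
      _ ≤ 2 * h * ‖w‖ + 2 * ‖w - A‖ + ‖u - B‖ := by
          have ha1 : |1 - (1-h)⁻¹| ≤ 2 * h := by
            rw [abs_sub_comm, abs_of_nonneg (by linarith)]
            have : (1-h)⁻¹ - 1 = h * (1-h)⁻¹ := by field_simp; ring
            rw [this]
            calc h * (1-h)⁻¹ ≤ h * 2 := by
                  exact mul_le_mul_of_nonneg_left hc2 hh0.le
              _ = 2 * h := by ring
          have ha2 : |(1-h)⁻¹| ≤ 2 := by rw [abs_of_pos (by positivity)]; exact hc2
          gcongr
      _ = 2 * h * ‖w‖ + 2 * dist w A + dist u B := by rw [dist_eq_norm, dist_eq_norm]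
  refine key.trans ?_
  have := Metric.infDist_nonneg (x := w) (s := (fun k => (s^2)⁻¹ • (k - e - s • y)) '' E)
  linarith

theorem stmt_3 {X : Type*} [NormedAddCommGroup X] [NormedSpace ℝ X]
    (E : Set X) (hE : Convex ℝ E) (e : X) (he : e ∈ E) (y : X) (hy : y ∈ adjCone E e)
    (hne : (adjCone2 E e y).Nonempty) :
    adjCone2 E e y + adjCone E e = adjCone2 E e y := by
  ext x
  constructor
  · rintro ⟨w, hw, u, hu, rfl⟩
    exact add_mem_adjCone2 hE he hw hu
  · intro hx
    exact ⟨x, hx, 0, zero_mem_adjCone he, add_zero x⟩
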